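/- arXiv:1008.0596 — 9 statements merged into one kernel-verified Lean document; each statement's English description precedes it below -/
import Mathlib

section
/- Suppose a, b, c are positive integers such that the quadratic form a·x^2 + b·y^2 + c·z^2 + u^2 is anisotropic over ℚ_3, and d is an integer with d ≡ 2 (mod 3). Then the system s^2 = d(xy + 5z^2), s^2 - 5t^2 = d(x+y)(x+2y), u^2 = d(ax^2 + by^2 + cz^2) — equivalently the projective variety Y^(d) in P^5 over ℚ_3 defined by d·(xy+5z^2) = s^2, d·((x+y)(x+2y)) = s^2 - 5t^2, d·(ax^2+by^2+cz^2) = u^2 — has no ℚ_3-points. -/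
theorem sq_neg_d (d : ℤ) (hd : d ≡ 2 [ZMOD 3]) : ∃ m : ℚ_[3], m ≠ 0 ∧ m ^ 2 = -(d : ℚ_[3]) := by
  have h31 : (3 : ℤ) ∣ d + 1 := by
    have := hd.dvd; omega
  set F : Polynomial ℤ_[3] := Polynomial.X ^ 2 + Polynomial.C (d : ℤ_[3]) with hF
  have hevala : F.eval 1 = ((d + 1 : ℤ) : ℤ_[3]) := by push_cast; simp [hF]; ring
  have hderiv : F.derivative.eval 1 = ((2 : ℤ) : ℤ_[3]) := by simp [hF]; norm_num
  have hnorm2 : ‖F.derivative.eval 1‖ = 1 := by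
    rw [hderiv]
    refine le_antisymm (PadicInt.norm_le_one _) (not_lt.mp ?_)
    rw [PadicInt.norm_int_lt_one_iff_dvd]
    decide
  have hnorm : ‖F.eval 1‖ < ‖F.derivative.eval 1‖ ^ 2 := by
    rw [hevala, hnorm2, one_pow, PadicInt.norm_int_lt_one_iff_dvd]
    exact_mod_cast h31
  obtain ⟨zr, hzr, -⟩ := hensels_lemma hnorm
  have hz : zr ^ 2 + (d : ℤ_[3]) = 0 := by simpa [hF] using hzr
  refine ⟨(zr : ℚ_[3]), ?_, ?_⟩
  · intro h0
    have hzr0 : zr = 0 := by rwa [PadicInt.coe_eq_zero] at h0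
    rw [hzr0] at hz
    have hd0 : (d : ℤ_[3]) = 0 := by simpa using hz
    have : d = 0 := by exact_mod_cast hd0
    omega
  · have := congrArg (fun w : ℤ_[3] => (w : ℚ_[3])) hz
    push_cast at this
    linear_combination this


/-- Suppose `a, b, c` are positive integers such that the quadratic form
`a·x² + b·y² + c·z² + u²` is anisotropic over `ℚ₃`, and `d` is an integer with `d ≡ 2 (mod 3)`.
Then the projective variety `Y⁽ᵈ⁾` in `ℙ⁵` over `ℚ₃` defined by `d(xy + 5z²) = s²`,
`d((x+y)(x+2y)) = s² - 5t²`, `d(ax² + by² + cz²) = u²` has no `ℚ₃`-points: every solution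
in `ℚ₃` is the zero solution. -/
theorem statement4 (a b c d : ℤ) (ha : 0 < a) (hb : 0 < b) (hc : 0 < c)
    (haniso : ∀ x y z u : ℚ_[3],
      (a : ℚ_[3]) * x ^ 2 + (b : ℚ_[3]) * y ^ 2 + (c : ℚ_[3]) * z ^ 2 + u ^ 2 = 0 →
      x = 0 ∧ y = 0 ∧ z = 0 ∧ u = 0)
    (hd : d ≡ 2 [ZMOD 3])
    (s t u x y z : ℚ_[3])
    (h1 : (d : ℚ_[3]) * (x * y + 5 * z ^ 2) = s ^ 2)
    (h2 : (d : ℚ_[3]) * ((x + y) * (x + 2 * y)) = s ^ 2 - 5 * t ^ 2)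
    (h3 : (d : ℚ_[3]) * ((a : ℚ_[3]) * x ^ 2 + (b : ℚ_[3]) * y ^ 2 + (c : ℚ_[3]) * z ^ 2)
      = u ^ 2) :
    s = 0 ∧ t = 0 ∧ u = 0 ∧ x = 0 ∧ y = 0 ∧ z = 0 := by
  obtain ⟨m, hm0, hm2⟩ := sq_neg_d d hd
  have hd3 : (d : ℚ_[3]) = -m ^ 2 := by linear_combination hm2
  have key : (a : ℚ_[3]) * x ^ 2 + (b : ℚ_[3]) * y ^ 2 + (c : ℚ_[3]) * z ^ 2
      + (u / m) ^ 2 = 0 := by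
    rw [hd3] at h3
    rw [div_pow]
    have hmul : ((a : ℚ_[3]) * x ^ 2 + (b : ℚ_[3]) * y ^ 2 + (c : ℚ_[3]) * z ^ 2
        + u ^ 2 / m ^ 2) * m ^ 2 = 0 := by
      have hm2' : m ^ 2 ≠ 0 := pow_ne_zero 2 hm0
      field_simp
      linear_combination -h3
    rcases mul_eq_zero.mp hmul with h | h
    · exact h
    · exact absurd h (pow_ne_zero 2 hm0)
  obtain ⟨hx, hy, hz, hum⟩ := haniso x y z (u / m) key
  have hu : u = 0 := by
    rcases div_eq_zero_iff.mp hum with h | h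
    · exact h
    · exact absurd h hm0
  have hs : s = 0 := by
    have hsq : s ^ 2 = 0 := by rw [← h1, hx, hz]; ring
    exact pow_eq_zero_iff (two_ne_zero) |>.mp hsq
  have ht : t = 0 := by
    rw [hx, hy, hs] at h2
    have htq : t ^ 2 = 0 := by linear_combination h2 / 5
    exact pow_eq_zero_iff (two_ne_zero) |>.mp htq
  exact ⟨hs, ht, hu, hx, hy, hz⟩
end

section
/- Let a, b, c be positive integers such that -bc is not a square modulo 5. Then the projective variety in P^5 over ℚ_5 defined by 10(xy + 5z^2) = s^2, 10((x+y)(x+2y)) = s^2 - 5t^2, 10(ax^2 + by^2 + cz^2) = u^2 has no ℚ_5-points. -/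
instance : Fact (Nat.Prime 5) := ⟨by norm_num⟩


lemma resid (A B C X Y Z T : ZMod 5) (hw : ∀ w : ZMod 5, w ^ 2 ≠ -(B * C))
    (hXY : X * Y = 0) (hT : 2 * ((X + Y) * (X + 2 * Y)) = -(T ^ 2))
    (hQ : 2 * (A * X ^ 2 + B * Y ^ 2 + C * Z ^ 2) = 0) :
    X = 0 ∧ Y = 0 ∧ Z = 0 ∧ T = 0 := by
  have h2 : (2 : ZMod 5) ≠ 0 := by decide
  have hC : C ≠ 0 := by
    intro h; exact hw 0 (by simp [h])
  have hY : Y = 0 := by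
    rcases mul_eq_zero.1 hXY with hX | hY
    · by_contra hY
      have hQ' : B * Y ^ 2 + C * Z ^ 2 = 0 := by
        have := (mul_eq_zero.1 hQ).resolve_left h2
        rw [hX] at this; linear_combination this
      apply hw (C * Z * Y⁻¹)
      have h1 : Y * Y⁻¹ = 1 := mul_inv_cancel₀ hY
      linear_combination (C * Y⁻¹^2) * hQ' + (-(B*C)*(Y*Y⁻¹) - B*C) * h1
    · exact hY
  have hX : X = 0 := by
    by_contra hX
    have h1 : X * X⁻¹ = 1 := mul_inv_cancel₀ hX
    have : (T * X⁻¹) ^ 2 = 3 := by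
      rw [hY] at hT
      have h5 : (5:ZMod 5) = 0 := by decide
      linear_combination (X⁻¹^2) * hT + (-2*(X*X⁻¹+1)) * h1 + (-1:ZMod 5) * h5
    exact (by decide : ∀ w : ZMod 5, w ^ 2 ≠ 3) _ this
  have hT0 : T = 0 := by
    have : T ^ 2 = 0 := by rw [hX, hY] at hT; linear_combination hT
    exact pow_eq_zero_iff (by norm_num) |>.1 this
  have hZ : Z = 0 := by
    have : C * Z ^ 2 = 0 := by
      have := (mul_eq_zero.1 hQ).resolve_left h2
      rw [hX, hY] at this; linear_combination this
    have := (mul_eq_zero.1 this).resolve_left hC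
    exact pow_eq_zero_iff (by norm_num) |>.1 this
  exact ⟨hX, hY, hZ, hT0⟩

lemma dvd_of_toZMod_eq_zero (v : ℤ_[5]) (hv : PadicInt.toZMod v = 0) : (5:ℤ_[5]) ∣ v := by
  have : v ∈ RingHom.ker (PadicInt.toZMod (p := 5)) := hv
  rw [PadicInt.ker_toZMod, PadicInt.maximalIdeal_eq_span_p, Ideal.mem_span_singleton] at this
  exact_mod_cast this

lemma key (a b c : ℤ)
    (hw : ∀ w : ZMod 5, w ^ 2 ≠ -(((b : ℤ) : ZMod 5) * ((c : ℤ) : ZMod 5)))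
    (S T U X Y Z : ℤ_[5])
    (h1 : 10 * (X * Y + 5 * Z ^ 2) = S ^ 2)
    (h2 : 10 * ((X + Y) * (X + 2 * Y)) = S ^ 2 - 5 * T ^ 2)
    (h3 : 10 * ((a : ℤ_[5]) * X ^ 2 + (b : ℤ_[5]) * Y ^ 2 + (c : ℤ_[5]) * Z ^ 2) = U ^ 2) :
    (5:ℤ_[5]) ∣ S ∧ (5:ℤ_[5]) ∣ T ∧ (5:ℤ_[5]) ∣ U ∧ (5:ℤ_[5]) ∣ X ∧ (5:ℤ_[5]) ∣ Y ∧ (5:ℤ_[5]) ∣ Z := by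
  set φ := (PadicInt.toZMod : ℤ_[5] →+* ZMod 5) with hφ
  have h10 : φ 10 = 0 := by
    rw [show ((10:ℤ_[5])) = ((10:ℤ) : ℤ_[5]) by norm_cast, map_intCast]; decide
  have h5' : φ 5 = 0 := by
    rw [show ((5:ℤ_[5])) = ((5:ℤ) : ℤ_[5]) by norm_cast, map_intCast]; decide
  have h5ne : (5:ℤ_[5]) ≠ 0 := by
    have : ((5:ℕ) : ℤ_[5]) ≠ 0 := Nat.cast_ne_zero.2 (by norm_num)
    simpa using this
  -- S divisible by 5
  have hS0 : φ S = 0 := by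
    have e1 := congrArg φ h1
    simp only [map_mul, map_add, map_pow, h10, zero_mul] at e1
    exact pow_eq_zero_iff (n := 2) (by norm_num) |>.1 e1.symm
  obtain ⟨S1, hS1⟩ := dvd_of_toZMod_eq_zero S hS0
  have hU0 : φ U = 0 := by
    have e3 := congrArg φ h3
    simp only [map_mul, map_add, map_pow, h10, zero_mul] at e3
    exact pow_eq_zero_iff (n := 2) (by norm_num) |>.1 e3.symm
  obtain ⟨U1, hU1⟩ := dvd_of_toZMod_eq_zero U hU0
  -- refined equations
  have h1' : 2 * (X * Y + 5 * Z ^ 2) = 5 * S1 ^ 2 := by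
    apply mul_left_cancel₀ h5ne
    rw [hS1] at h1; linear_combination h1
  have h2' : 2 * ((X + Y) * (X + 2 * Y)) = 5 * S1 ^ 2 - T ^ 2 := by
    apply mul_left_cancel₀ h5ne
    rw [hS1] at h2; linear_combination h2
  have h3' : 2 * ((a : ℤ_[5]) * X ^ 2 + (b : ℤ_[5]) * Y ^ 2 + (c : ℤ_[5]) * Z ^ 2) = 5 * U1 ^ 2 := by
    apply mul_left_cancel₀ h5ne
    rw [hU1] at h3; linear_combination h3
  -- reduce mod 5
  have e1 := congrArg φ h1'
  have e2 := congrArg φ h2'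
  have e3 := congrArg φ h3'
  simp only [map_mul, map_add, map_sub, map_pow, map_ofNat, h5', zero_mul, map_intCast,
    (by decide : (5 : ZMod 5) = 0), zero_pow, mul_zero, add_zero, zero_add, zero_sub] at e1 e2 e3
  have h2z : (2 : ZMod 5) ≠ 0 := by decide
  have hXY : φ X * φ Y = 0 := (mul_eq_zero.1 e1).resolve_left h2z
  obtain ⟨hX, hY, hZ, hT⟩ := resid _ _ _ _ _ _ _ hw hXY e2 e3
  refine ⟨⟨S1, hS1⟩, dvd_of_toZMod_eq_zero _ hT, ⟨U1, hU1⟩,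
    dvd_of_toZMod_eq_zero _ hX, dvd_of_toZMod_eq_zero _ hY, dvd_of_toZMod_eq_zero _ hZ⟩

/-- Let `a, b, c` be positive integers such that `-bc` is not a square modulo `5`.  Then the
projective variety in `ℙ⁵` over `ℚ₅` defined by `10(xy + 5z²) = s²`,
`10((x+y)(x+2y)) = s² - 5t²`, `10(ax² + by² + cz²) = u²` has no `ℚ₅`-points: every solution
in `ℚ₅` is the zero solution. -/
theorem statement5 (a b c : ℤ) (ha : 0 < a) (hb : 0 < b) (hc : 0 < c)
    (hns : ¬ ∃ w : ℤ, w ^ 2 ≡ -(b * c) [ZMOD 5])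
    (s t u x y z : ℚ_[5])
    (h1 : 10 * (x * y + 5 * z ^ 2) = s ^ 2)
    (h2 : 10 * ((x + y) * (x + 2 * y)) = s ^ 2 - 5 * t ^ 2)
    (h3 : 10 * ((a : ℚ_[5]) * x ^ 2 + (b : ℚ_[5]) * y ^ 2 + (c : ℚ_[5]) * z ^ 2) = u ^ 2) :
    s = 0 ∧ t = 0 ∧ u = 0 ∧ x = 0 ∧ y = 0 ∧ z = 0 := by
  have hw : ∀ w : ZMod 5, w ^ 2 ≠ -(((b : ℤ) : ZMod 5) * ((c : ℤ) : ZMod 5)) := by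
    intro w hwe
    obtain ⟨w', rfl⟩ := ZMod.intCast_surjective w
    apply hns
    refine ⟨w', ?_⟩
    have : ((w' ^ 2 : ℤ) : ZMod 5) = ((-(b * c) : ℤ) : ZMod 5) := by push_cast; exact hwe
    exact_mod_cast (ZMod.intCast_eq_intCast_iff _ _ _).1 this
  set r : ℝ := max ‖s‖ (max ‖t‖ (max ‖u‖ (max ‖x‖ (max ‖y‖ ‖z‖)))) with hr
  have hsr : ‖s‖ ≤ r := le_max_left _ _
  have htr : ‖t‖ ≤ r := le_trans (le_max_left _ _) (le_max_right _ _)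
  have hur : ‖u‖ ≤ r :=
    le_trans (le_trans (le_max_left _ _) (le_max_right _ _)) (le_max_right _ _)
  have hxr : ‖x‖ ≤ r :=
    le_trans (le_trans (le_trans (le_max_left _ _) (le_max_right _ _)) (le_max_right _ _))
      (le_max_right _ _)
  have hyr : ‖y‖ ≤ r :=
    le_trans (le_trans (le_trans (le_trans (le_max_left _ _) (le_max_right _ _))
      (le_max_right _ _)) (le_max_right _ _)) (le_max_right _ _)
  have hzr : ‖z‖ ≤ r :=
    le_trans (le_trans (le_trans (le_trans (le_max_right _ _) (le_max_right _ _))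
      (le_max_right _ _)) (le_max_right _ _)) (le_max_right _ _)
  have hr0 : r = 0 := by
    by_contra hrne
    have hattain : ∃ w : ℚ_[5], ‖w‖ = r := by
      rcases max_choice ‖s‖ (max ‖t‖ (max ‖u‖ (max ‖x‖ (max ‖y‖ ‖z‖)))) with h | h
      · exact ⟨s, (hr.trans h).symm⟩
      have h0 := hr.trans h
      rcases max_choice ‖t‖ (max ‖u‖ (max ‖x‖ (max ‖y‖ ‖z‖))) with h | h
      · exact ⟨t, (h0.trans h).symm⟩
      have h1 := h0.trans h
      rcases max_choice ‖u‖ (max ‖x‖ (max ‖y‖ ‖z‖)) with h | h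
      · exact ⟨u, (h1.trans h).symm⟩
      have h2 := h1.trans h
      rcases max_choice ‖x‖ (max ‖y‖ ‖z‖) with h | h
      · exact ⟨x, (h2.trans h).symm⟩
      have h3 := h2.trans h
      rcases max_choice ‖y‖ ‖z‖ with h | h
      · exact ⟨y, (h3.trans h).symm⟩
      · exact ⟨z, (h3.trans h).symm⟩
    obtain ⟨w, hwr⟩ := hattain
    have hw0 : w ≠ 0 := fun h => hrne (by rw [← hwr, h, norm_zero])
    set n := w.valuation with hn
    have hrval : r = (5 : ℝ) ^ (-n) := by
      rw [← hwr, Padic.norm_eq_zpow_neg_valuation hw0]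
      norm_num [hn]
    set lam : ℚ_[5] := (5 : ℚ_[5]) ^ (-n) with hlam
    have hlnorm : ‖lam‖ = (5 : ℝ) ^ n := by
      have := Padic.norm_p_zpow (p := 5) (-n)
      rw [hlam]
      push_cast at this
      simpa using this
    have hbound : ∀ v : ℚ_[5], ‖v‖ ≤ r → ‖lam * v‖ ≤ 1 := by
      intro v hv
      rw [norm_mul, hlnorm]
      calc (5:ℝ) ^ n * ‖v‖ ≤ (5:ℝ) ^ n * ((5:ℝ) ^ (-n)) := by
            apply mul_le_mul_of_nonneg_left _ (le_of_lt (zpow_pos (by norm_num) n))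
            rw [← hrval]; exact hv
        _ = 1 := by
            rw [← zpow_add₀ (by norm_num : (5:ℝ) ≠ 0)]; simp
    set Sz : ℤ_[5] := ⟨lam * s, hbound s hsr⟩ with hSz
    set Tz : ℤ_[5] := ⟨lam * t, hbound t htr⟩ with hTz
    set Uz : ℤ_[5] := ⟨lam * u, hbound u hur⟩ with hUz
    set Xz : ℤ_[5] := ⟨lam * x, hbound x hxr⟩ with hXz
    set Yz : ℤ_[5] := ⟨lam * y, hbound y hyr⟩ with hYz
    set Zz : ℤ_[5] := ⟨lam * z, hbound z hzr⟩ with hZz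
    have h1Z : (10 : ℤ_[5]) * (Xz * Yz + 5 * Zz ^ 2) = Sz ^ 2 := by
      apply Subtype.coe_injective
      push_cast
      show (10 : ℚ_[5]) * ((lam * x) * (lam * y) + 5 * (lam * z) ^ 2) = (lam * s) ^ 2
      linear_combination lam ^ 2 * h1
    have h2Z : (10 : ℤ_[5]) * ((Xz + Yz) * (Xz + 2 * Yz)) = Sz ^ 2 - 5 * Tz ^ 2 := by
      apply Subtype.coe_injective
      push_cast
      show (10 : ℚ_[5]) * ((lam * x + lam * y) * (lam * x + 2 * (lam * y)))
          = (lam * s) ^ 2 - 5 * (lam * t) ^ 2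
      linear_combination lam ^ 2 * h2
    have h3Z : (10 : ℤ_[5]) * ((a : ℤ_[5]) * Xz ^ 2 + (b : ℤ_[5]) * Yz ^ 2 + (c : ℤ_[5]) * Zz ^ 2)
        = Uz ^ 2 := by
      apply Subtype.coe_injective
      push_cast
      show (10 : ℚ_[5]) * ((a : ℚ_[5]) * (lam * x) ^ 2 + (b : ℚ_[5]) * (lam * y) ^ 2
          + (c : ℚ_[5]) * (lam * z) ^ 2) = (lam * u) ^ 2
      linear_combination lam ^ 2 * h3
    obtain ⟨hdS, hdT, hdU, hdX, hdY, hdZ⟩ := key a b c hw Sz Tz Uz Xz Yz Zz h1Z h2Z h3Z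
    have hlt : ∀ (v : ℚ_[5]) (V : ℤ_[5]), (V : ℚ_[5]) = lam * v → (5 : ℤ_[5]) ∣ V →
        ‖v‖ < r := by
      intro v V hVcoe hdvd
      have h1' := (PadicInt.norm_lt_one_iff_dvd V).2 (by exact_mod_cast hdvd)
      rw [PadicInt.norm_def, hVcoe] at h1'
      have h1'' : (5:ℝ) ^ n * ‖v‖ < 1 := by
        rw [← hlnorm, ← norm_mul]; exact h1'
      have h5n : (0:ℝ) < (5:ℝ) ^ n := zpow_pos (by norm_num) n
      rw [hrval, zpow_neg]
      nlinarith [mul_inv_cancel₀ h5n.ne', norm_nonneg v]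
    have hcon : max ‖s‖ (max ‖t‖ (max ‖u‖ (max ‖x‖ (max ‖y‖ ‖z‖)))) < r :=
      max_lt (hlt s Sz rfl hdS) (max_lt (hlt t Tz rfl hdT) (max_lt (hlt u Uz rfl hdU)
        (max_lt (hlt x Xz rfl hdX) (max_lt (hlt y Yz rfl hdY) (hlt z Zz rfl hdZ)))))
    rw [← hr] at hcon
    exact absurd hcon (lt_irrefl r)
  exact ⟨norm_eq_zero.1 (le_antisymm (hr0 ▸ hsr) (norm_nonneg s)),
    norm_eq_zero.1 (le_antisymm (hr0 ▸ htr) (norm_nonneg t)),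
    norm_eq_zero.1 (le_antisymm (hr0 ▸ hur) (norm_nonneg u)),
    norm_eq_zero.1 (le_antisymm (hr0 ▸ hxr) (norm_nonneg x)),
    norm_eq_zero.1 (le_antisymm (hr0 ▸ hyr) (norm_nonneg y)),
    norm_eq_zero.1 (le_antisymm (hr0 ▸ hzr) (norm_nonneg z))⟩
end

section
/- Let a, b, c be positive integers and p a prime with p ∤ 10 (p ≠ 2, 5), such that: for every prime q dividing 5a+5b+c, 5 is not a quadratic residue mod q; and for every prime q dividing 20a+5b+2c, 10 is not a quadratic residue mod q. Let d be a squarefree integer divisible by p. Then the system of congruences d(xy+5z^2) ≡ s^2, d((x+y)(x+2y)) ≡ s^2 - 5t^2, d(ax^2+by^2+cz^2) ≡ u^2 modulo p^2 has no solution (s,t,u,x,y,z) in integers with not all of s,t,u,x,y,z divisible by p. -/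
/-- Let `a, b, c` be positive integers and `p` a prime with `p ∤ 10`, such that: for every prime
`q` dividing `5a + 5b + c`, `5` is not a quadratic residue mod `q`; and for every prime `q`
dividing `20a + 5b + 2c`, `10` is not a quadratic residue mod `q`.  Let `d` be a squarefree
integer divisible by `p`.  Then the system of congruences `d(xy+5z²) ≡ s²`,
`d((x+y)(x+2y)) ≡ s² - 5t²`, `d(ax²+by²+cz²) ≡ u²` modulo `p²` has no primitive solution,
i.e. no integer solution with not all of `s, t, u, x, y, z` divisible by `p`. -/
theorem statement6 (a b c : ℤ) (ha : 0 < a) (hb : 0 < b) (hc : 0 < c)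
    (p : ℕ) (hp : p.Prime) (hp10 : ¬ (p : ℤ) ∣ 10)
    (h5 : ∀ q : ℕ, q.Prime → (q : ℤ) ∣ 5 * a + 5 * b + c →
      ¬ ∃ w : ℤ, w ^ 2 ≡ 5 [ZMOD (q : ℤ)])
    (h10 : ∀ q : ℕ, q.Prime → (q : ℤ) ∣ 20 * a + 5 * b + 2 * c →
      ¬ ∃ w : ℤ, w ^ 2 ≡ 10 [ZMOD (q : ℤ)])
    (d : ℤ) (hd : Squarefree d) (hpd : (p : ℤ) ∣ d) :
    ¬ ∃ s t u x y z : ℤ,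
      (d * (x * y + 5 * z ^ 2) ≡ s ^ 2 [ZMOD ((p : ℤ) ^ 2)]) ∧
      (d * ((x + y) * (x + 2 * y)) ≡ s ^ 2 - 5 * t ^ 2 [ZMOD ((p : ℤ) ^ 2)]) ∧
      (d * (a * x ^ 2 + b * y ^ 2 + c * z ^ 2) ≡ u ^ 2 [ZMOD ((p : ℤ) ^ 2)]) ∧
      ¬ ((p : ℤ) ∣ s ∧ (p : ℤ) ∣ t ∧ (p : ℤ) ∣ u ∧
         (p : ℤ) ∣ x ∧ (p : ℤ) ∣ y ∧ (p : ℤ) ∣ z) := by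
  rintro ⟨s, t, u, x, y, z, h1, h2, h3, hnot⟩
  haveI : Fact p.Prime := ⟨hp⟩
  have hP : Prime ((p : ℤ)) := Nat.prime_iff_prime_int.mp hp
  have hPne : (p : ℤ) ≠ 0 := hP.ne_zero
  -- p does not divide 2 or 5
  have hp2 : ¬ (p : ℤ) ∣ 2 := fun h => hp10 (h.trans ⟨5, by ring⟩)
  have hp5 : ¬ (p : ℤ) ∣ 5 := fun h => hp10 (h.trans ⟨2, by ring⟩)
  -- d = p * e with p ∤ e
  obtain ⟨e, rfl⟩ := hpd
  have hpe : ¬ (p : ℤ) ∣ e := by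
    rintro ⟨f, rfl⟩
    exact hP.not_unit (hd (p : ℤ) ⟨f, by ring⟩)
  -- p | p^2
  have hpp2 : (p : ℤ) ∣ (p : ℤ) ^ 2 := ⟨(p : ℤ), by ring⟩
  have hpd' : (p : ℤ) ∣ (p : ℤ) * e := ⟨e, rfl⟩
  -- p | s
  have hds1 : ((p:ℤ))^2 ∣ s ^ 2 - (p:ℤ) * e * (x * y + 5 * z ^ 2) := h1.dvd
  have hs : (p : ℤ) ∣ s := by
    refine hP.dvd_of_dvd_pow (n := 2) ?_
    have : (p:ℤ) ∣ s ^ 2 - (p:ℤ) * e * (x * y + 5 * z ^ 2) := hpp2.trans hds1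
    have := this.add (hpd'.mul_right (x * y + 5 * z ^ 2))
    simpa using this
  have hdt1 : ((p:ℤ))^2 ∣ (s ^ 2 - 5 * t ^ 2) - (p:ℤ) * e * ((x + y) * (x + 2 * y)) := h2.dvd
  have ht : (p : ℤ) ∣ t := by
    have h5t : (p:ℤ) ∣ 5 * t ^ 2 := by
      have h1' : (p:ℤ) ∣ (s ^ 2 - 5 * t ^ 2) - (p:ℤ) * e * ((x + y) * (x + 2 * y)) :=
        hpp2.trans hdt1
      have := ((hs.mul_left s).mul_left 1).sub
        (h1'.add (hpd'.mul_right ((x + y) * (x + 2 * y))))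
      simpa [pow_two] using this
    exact hP.dvd_of_dvd_pow (n := 2) ((hP.dvd_mul.mp h5t).resolve_left hp5)
  have hdu1 : ((p:ℤ))^2 ∣ u ^ 2 - (p:ℤ) * e * (a * x ^ 2 + b * y ^ 2 + c * z ^ 2) := h3.dvd
  have hu : (p : ℤ) ∣ u := by
    refine hP.dvd_of_dvd_pow (n := 2) ?_
    have : (p:ℤ) ∣ u ^ 2 - (p:ℤ) * e * (a * x ^ 2 + b * y ^ 2 + c * z ^ 2) := hpp2.trans hdu1
    have := this.add (hpd'.mul_right (a * x ^ 2 + b * y ^ 2 + c * z ^ 2))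
    simpa using this
  -- now p^2 | p*e*A for each quadratic form A, hence p | A
  have key : ∀ A : ℤ, ((p:ℤ))^2 ∣ (p:ℤ) * e * A → (p:ℤ) ∣ A := by
    intro A hA
    have : (p:ℤ) * (p:ℤ) ∣ (p:ℤ) * (e * A) := by
      rw [← mul_assoc]; simpa [pow_two] using hA
    have : (p:ℤ) ∣ e * A := (mul_dvd_mul_iff_left hPne).mp this
    exact (hP.dvd_mul.mp this).resolve_left hpe
  obtain ⟨s0, rfl⟩ := hs
  obtain ⟨t0, rfl⟩ := ht
  obtain ⟨u0, rfl⟩ := hu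
  have hA1 : (p:ℤ) ∣ x * y + 5 * z ^ 2 := by
    refine key _ ?_
    have : ((p:ℤ))^2 ∣ ((p:ℤ) * s0) ^ 2 := ⟨s0 ^ 2, by ring⟩
    have := hds1.sub this
    simpa [sub_sub_cancel_left, dvd_neg] using this
  have hA2 : (p:ℤ) ∣ (x + y) * (x + 2 * y) := by
    refine key _ ?_
    have hsq : ((p:ℤ))^2 ∣ (((p:ℤ) * s0) ^ 2 - 5 * ((p:ℤ) * t0) ^ 2) :=
      ⟨s0 ^ 2 - 5 * t0 ^ 2, by ring⟩
    have := hdt1.sub hsq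
    simpa [sub_sub_cancel_left, dvd_neg] using this
  have hA3 : (p:ℤ) ∣ a * x ^ 2 + b * y ^ 2 + c * z ^ 2 := by
    refine key _ ?_
    have : ((p:ℤ))^2 ∣ ((p:ℤ) * u0) ^ 2 := ⟨u0 ^ 2, by ring⟩
    have := hdu1.sub this
    simpa [sub_sub_cancel_left, dvd_neg] using this
  -- move to ZMod p
  have e1 : (x : ZMod p) * y + 5 * (z : ZMod p) ^ 2 = 0 := by
    have := (ZMod.intCast_zmod_eq_zero_iff_dvd _ p).mpr hA1
    push_cast at this; linear_combination this
  have e2 : ((x : ZMod p) + y) * ((x : ZMod p) + 2 * y) = 0 := by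
    have := (ZMod.intCast_zmod_eq_zero_iff_dvd _ p).mpr hA2
    push_cast at this; linear_combination this
  have e3 : (a : ZMod p) * (x:ZMod p) ^ 2 + b * (y:ZMod p) ^ 2 + c * (z:ZMod p) ^ 2 = 0 := by
    have := (ZMod.intCast_zmod_eq_zero_iff_dvd _ p).mpr hA3
    push_cast at this; linear_combination this
  have h5ne : (5 : ZMod p) ≠ 0 := by
    intro h
    apply hp5
    have h' : ((5:ℤ) : ZMod p) = 0 := by push_cast; exact h
    exact (ZMod.intCast_zmod_eq_zero_iff_dvd (5:ℤ) p).mp h'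
  have h2ne : (2 : ZMod p) ≠ 0 := by
    intro h
    apply hp2
    have h' : ((2:ℤ) : ZMod p) = 0 := by push_cast; exact h
    exact (ZMod.intCast_zmod_eq_zero_iff_dvd (2:ℤ) p).mp h'
  -- final contradiction via the two cases
  have hall : (p:ℤ) ∣ x ∧ (p:ℤ) ∣ y ∧ (p:ℤ) ∣ z := by
    rcases mul_eq_zero.mp e2 with hcase | hcase
    · -- x + y = 0, so x = -y
      have hxy : (x : ZMod p) = - (y : ZMod p) := by linear_combination hcase
      have e1' : (5 : ZMod p) * (z:ZMod p) ^ 2 = (y:ZMod p) ^ 2 := by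
        rw [hxy] at e1; linear_combination e1
      by_cases hz : (z : ZMod p) = 0
      · have hy : (y : ZMod p) = 0 := by
          have : (y:ZMod p) ^ 2 = 0 := by rw [← e1', hz]; ring
          exact pow_eq_zero_iff (n := 2) (by norm_num) |>.mp this
        refine ⟨?_, ?_, ?_⟩
        · exact (ZMod.intCast_zmod_eq_zero_iff_dvd _ p).mp (by rw [hxy, hy]; ring)
        · exact (ZMod.intCast_zmod_eq_zero_iff_dvd _ p).mp hy
        · exact (ZMod.intCast_zmod_eq_zero_iff_dvd _ p).mp hz
      · -- 5 is a square mod p and p | 5a+5b+c : contradiction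
        exfalso
        have hdvd : (p:ℤ) ∣ 5 * a + 5 * b + c := by
          rw [← ZMod.intCast_zmod_eq_zero_iff_dvd]
          have hz2 : (z:ZMod p) ^ 2 ≠ 0 := pow_ne_zero _ hz
          have : ((5 * a + 5 * b + c : ℤ) : ZMod p) * (z:ZMod p) ^ 2 = 0 := by
            push_cast
            rw [hxy] at e3
            have hx2 : (-(y:ZMod p)) ^ 2 = (5:ZMod p) * (z:ZMod p)^2 := by
              rw [neg_pow, ← e1']; ring
            linear_combination e3 + ((a:ZMod p) + (b:ZMod p)) * e1'
          exact (mul_eq_zero.mp this).resolve_right hz2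
        refine h5 p hp hdvd ⟨(((y:ZMod p) * (z:ZMod p)⁻¹).val : ℤ), ?_⟩
        rw [← ZMod.intCast_eq_intCast_iff]
        push_cast [ZMod.natCast_val, ZMod.cast_id]
        rw [mul_pow, ← e1']
        field_simp
    · -- x + 2y = 0
      have hxy : (x : ZMod p) = - 2 * (y : ZMod p) := by linear_combination hcase
      have e1' : (5 : ZMod p) * (z:ZMod p) ^ 2 = 2 * (y:ZMod p) ^ 2 := by
        rw [hxy] at e1; linear_combination e1
      by_cases hy : (y : ZMod p) = 0
      · have hz : (z : ZMod p) = 0 := by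
          have h52 : (5:ZMod p) * (z:ZMod p) ^ 2 = 0 := by rw [e1', hy]; ring
          have := (mul_eq_zero.mp h52).resolve_left h5ne
          exact pow_eq_zero_iff (n := 2) (by norm_num) |>.mp this
        refine ⟨?_, ?_, ?_⟩
        · exact (ZMod.intCast_zmod_eq_zero_iff_dvd _ p).mp (by rw [hxy, hy]; ring)
        · exact (ZMod.intCast_zmod_eq_zero_iff_dvd _ p).mp hy
        · exact (ZMod.intCast_zmod_eq_zero_iff_dvd _ p).mp hz
      · exfalso
        have hz : (z : ZMod p) ≠ 0 := by
          intro hz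
          have h2y : (2:ZMod p) * (y:ZMod p) ^ 2 = 0 := by rw [← e1', hz]; ring
          have := (mul_eq_zero.mp h2y).resolve_left h2ne
          exact hy (pow_eq_zero_iff (n := 2) (by norm_num) |>.mp this)
        have hdvd : (p:ℤ) ∣ 20 * a + 5 * b + 2 * c := by
          rw [← ZMod.intCast_zmod_eq_zero_iff_dvd]
          have hy2 : (y:ZMod p) ^ 2 ≠ 0 := pow_ne_zero _ hy
          have : ((20 * a + 5 * b + 2 * c : ℤ) : ZMod p) * (y:ZMod p) ^ 2 = 0 := by
            push_cast
            rw [hxy] at e3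
            linear_combination 5 * e3 - (c:ZMod p) * e1'
          exact (mul_eq_zero.mp this).resolve_right hy2
        refine h10 p hp hdvd ⟨((2 * (y:ZMod p) * (z:ZMod p)⁻¹).val : ℤ), ?_⟩
        rw [← ZMod.intCast_eq_intCast_iff]
        push_cast [ZMod.natCast_val, ZMod.cast_id]
        have : (2 * (y:ZMod p) * (z:ZMod p)⁻¹) ^ 2
            = (2 * (2 * (y:ZMod p)^2)) * ((z:ZMod p)⁻¹)^2 := by ring
        rw [this, ← e1']
        field_simp
        ring
  exact hnot ⟨⟨s0, rfl⟩, ⟨t0, rfl⟩, ⟨u0, rfl⟩, hall.1, hall.2.1, hall.2.2⟩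
end

section
/- The involution σ of P^5 given by (s:t:u:x:y:z) ↦ (-s:-t:-u:x:y:z) has no fixed points on the variety Y_a defined by xy + 5z^2 = s^2, (x+y)(x+2y) = s^2 - 5t^2, ax^2 + by^2 + cz^2 = u^2, over an algebraically closed field of characteristic 0, provided abc(5a+5b+c)(20a+5b+2c)(4a^2+b^2)(c^2-100ab)(c^2+5bc+10ac+25ab) ≠ 0. -/
/-- Over an algebraically closed field of characteristic `0`, the involution
`σ : (s:t:u:x:y:z) ↦ (-s:-t:-u:x:y:z)` of `ℙ⁵` has no fixed points on the surface `Y_𝐚`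
defined by `xy + 5z² = s²`, `(x+y)(x+2y) = s² - 5t²`, `ax² + by² + cz² = u²`, provided
`abc(5a+5b+c)(20a+5b+2c)(4a²+b²)(c²-100ab)(c²+5bc+10ac+25ab) ≠ 0`.  A fixed point would be a
point of `Y_𝐚` with either `(s,t,u) = 0` or `(x,y,z) = 0`; no such nonzero solution exists. -/
theorem statement10 {k : Type*} [Field k] [IsAlgClosed k] [CharZero k] (a b c : k)
    (hgen : a * b * c * (5 * a + 5 * b + c) * (20 * a + 5 * b + 2 * c) *
      (4 * a ^ 2 + b ^ 2) * (c ^ 2 - 100 * a * b) *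
      (c ^ 2 + 5 * b * c + 10 * a * c + 25 * a * b) ≠ 0)
    (s t u x y z : k)
    (h1 : x * y + 5 * z ^ 2 = s ^ 2)
    (h2 : (x + y) * (x + 2 * y) = s ^ 2 - 5 * t ^ 2)
    (h3 : a * x ^ 2 + b * y ^ 2 + c * z ^ 2 = u ^ 2)
    (hfix : (s = 0 ∧ t = 0 ∧ u = 0) ∨ (x = 0 ∧ y = 0 ∧ z = 0)) :
    s = 0 ∧ t = 0 ∧ u = 0 ∧ x = 0 ∧ y = 0 ∧ z = 0 := by
  obtain ⟨hs, ht, hu⟩ | ⟨hx, hy, hz⟩ := hfix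
  · subst hs; subst ht; subst hu
    refine ⟨rfl, rfl, rfl, ?_⟩
    simp only [ne_eq, mul_eq_zero, not_or] at hgen
    obtain ⟨⟨⟨⟨⟨⟨⟨-, -⟩, -⟩, hf1⟩, hf2⟩, -⟩, -⟩, -⟩ := hgen
    have h2' : (x + y) * (x + 2 * y) = 0 := by linear_combination h2
    rcases mul_eq_zero.mp h2' with hcase | hcase
    · -- y = -x
      have hy : y = -x := by linear_combination hcase
      subst hy
      have hz2 : (5 * a + 5 * b + c) * z ^ 2 = 0 := by linear_combination (a + b) * h1 + h3
      have hz0 : z = 0 := by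
        have := mul_eq_zero.mp hz2
        rcases this with h | h
        · exact absurd h hf1
        · exact pow_eq_zero_iff (n := 2) (by norm_num) |>.mp h
      subst hz0
      have hx0 : x = 0 := by
        have : x ^ 2 = 0 := by linear_combination -h1
        exact pow_eq_zero_iff (n := 2) (by norm_num) |>.mp this
      subst hx0
      exact ⟨rfl, by ring, rfl⟩
    · -- x = -2y
      have hx : x = -2 * y := by linear_combination hcase
      subst hx
      have hz2 : (20 * a + 5 * b + 2 * c) * z ^ 2 = 0 := by
        linear_combination (4 * a + b) * h1 + 2 * h3
      have hz0 : z = 0 := by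
        rcases mul_eq_zero.mp hz2 with h | h
        · exact absurd h hf2
        · exact pow_eq_zero_iff (n := 2) (by norm_num) |>.mp h
      subst hz0
      have hy0 : y = 0 := by
        have : y ^ 2 = 0 := by linear_combination (-1/2 : k) * h1
        exact pow_eq_zero_iff (n := 2) (by norm_num) |>.mp this
      subst hy0
      exact ⟨by ring, rfl, rfl⟩
  · subst hx; subst hy; subst hz
    have hs : s = 0 := by
      have : s ^ 2 = 0 := by linear_combination -h1
      exact pow_eq_zero_iff (n := 2) (by norm_num) |>.mp this
    subst hs
    have ht : t = 0 := by
      have : t ^ 2 = 0 := by linear_combination (1/5 : k) * h2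
      exact pow_eq_zero_iff (n := 2) (by norm_num) |>.mp this
    have hu : u = 0 := by
      have : u ^ 2 = 0 := by linear_combination -h3
      exact pow_eq_zero_iff (n := 2) (by norm_num) |>.mp this
    exact ⟨rfl, ht, hu, rfl, rfl, rfl⟩
end

section
/- Let L be a free ℤ-module of rank 15 with basis G_1, F_1, ..., F_14 equipped with the symmetric bilinear form determined by F_i·F_i = G_1·G_1 = 0, F_1·G_1 = 4, F_i·G_1 = 2 for i ≠ 1, and F_i·F_j = 2 for i ≠ j. Then L is nondegenerate and its discriminant (determinant of the Gram matrix) is ±2^17. -/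
open Matrix

/-- The Gram matrix of the rank-15 lattice with basis `G₁, F₁, …, F₁₄` (index `0`
corresponding to `G₁` and indices `1, …, 14` to `F₁, …, F₁₄`), with pairings
`Fᵢ·Fᵢ = G₁·G₁ = 0`, `F₁·G₁ = 4`, `Fᵢ·G₁ = 2` for `i ≠ 1`, and `Fᵢ·Fⱼ = 2` for `i ≠ j`. -/
def gram15 : Matrix (Fin 15) (Fin 15) ℤ :=
  Matrix.of fun i j =>
    if i = j then 0
    else if (i = 0 ∧ j = 1) ∨ (i = 1 ∧ j = 0) then 4
    else 2

/-- A change-of-basis matrix diagonalizing the Gram pairing. -/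
def cp15 : Matrix (Fin 15) (Fin 15) ℤ :=
  Matrix.of fun i j =>
    if (i : ℕ) < 2 then (if (j : ℕ) ≥ 2 then -1 else if i = 1 ∧ j = 1 then -1 else 1)
    else if i = j then 2 else 0

/-- The diagonalized form, written as an `ite` matrix (it is triangular). -/
def dg15 : Matrix (Fin 15) (Fin 15) ℤ :=
  Matrix.of fun i j =>
    if i = j then (if (i : ℕ) = 0 then 8 else -8) else 0

/-- Lower-triangular factor of `cp15`. -/
def lo15 : Matrix (Fin 15) (Fin 15) ℤ :=
  Matrix.of fun i j =>
    if i = j then 1 else if i = 1 ∧ j = 0 then 1 else 0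

/-- Upper-triangular factor of `cp15`. -/
def up15 : Matrix (Fin 15) (Fin 15) ℤ :=
  Matrix.of fun i j =>
    if (i : ℕ) = 0 then (if (j : ℕ) ≥ 2 then -1 else 1)
    else if i = j then (if (i : ℕ) = 1 then -2 else 2)
    else 0

lemma key_s11 : cp15ᵀ * gram15 * cp15 = dg15 := by decide

lemma cp15_lu : cp15 = lo15 * up15 := by decide

lemma lo15_tri : lo15.BlockTriangular (OrderDual.toDual ∘ id) :=
  fun i j h => (by decide : ∀ i j : Fin 15, i < j → (show ℤ from lo15 i j) = 0) i j h

lemma up15_tri : up15.BlockTriangular id :=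
  fun i j h => (by decide : ∀ i j : Fin 15, j < i → (show ℤ from up15 i j) = 0) i j h

lemma dg15_tri : dg15.BlockTriangular id :=
  fun i j h => (by decide : ∀ i j : Fin 15, j < i → (show ℤ from dg15 i j) = 0) i j h

lemma det_mul15 (A B : Matrix (Fin 15) (Fin 15) ℤ) : (A * B).det = A.det * B.det := by
  have e1 : Int.instMul = (@NonUnitalNonAssocRing.toMul Int
    (@NonUnitalNonAssocCommRing.toNonUnitalNonAssocRing Int
      (@NonUnitalCommRing.toNonUnitalNonAssocCommRing Int
        (@CommRing.toNonUnitalCommRing Int Int.instCommRing)))) := rfl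
  have e2 : Int.instAddCommMonoid = (@NonUnitalNonAssocSemiring.toAddCommMonoid Int
    (@NonUnitalNonAssocCommSemiring.toNonUnitalNonAssocSemiring Int
      (@NonUnitalNonAssocCommRing.toNonUnitalNonAssocCommSemiring Int
        (@NonUnitalCommRing.toNonUnitalNonAssocCommRing Int
          (@CommRing.toNonUnitalCommRing Int Int.instCommRing))))) := rfl
  rw [e1, e2]
  exact Matrix.det_mul A B

lemma det_lo15 : lo15.det = 1 := by
  rw [Matrix.det_of_lowerTriangular lo15 lo15_tri]
  simp [lo15, Fin.prod_univ_succ]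

lemma det_up15 : up15.det = -(2 ^ 14) := by
  rw [Matrix.det_of_upperTriangular up15_tri]
  simp [up15, Fin.prod_univ_succ]

lemma det_dg15 : dg15.det = 2 ^ 45 := by
  rw [Matrix.det_of_upperTriangular dg15_tri]
  simp [dg15, Fin.prod_univ_succ]

lemma det_cp15 : cp15.det = -(2 ^ 14) := by
  rw [cp15_lu, det_mul15, det_lo15, det_up15, one_mul]

/-- The lattice `L = ⟨G₁, F₁, …, F₁₄⟩` with the intersection pairing above is nondegenerate
with discriminant `±2¹⁷`. -/
theorem statement11 : gram15.det ≠ 0 ∧ (gram15.det = 2 ^ 17 ∨ gram15.det = -(2 ^ 17)) := by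
  have h := congrArg Matrix.det key_s11
  rw [det_mul15, det_mul15, Matrix.det_transpose, det_cp15, det_dg15] at h
  have hd : gram15.det = 2 ^ 17 := by linarith
  exact ⟨by rw [hd]; norm_num, Or.inl hd⟩
end

section
/- Let N be an even unimodular lattice of rank 10 containing a sublattice M of index 2, where M has basis D_1, C_1, ..., C_9 with pairings C_i^2 = D_1^2 = 0, C_1·D_1 = 2, C_i·D_1 = 1 (i≥2), C_i·C_j = 1 (i≠j). If R ∈ N represents the nontrivial class of N/M and 2R = n_1 C_1 + ... + n_9 C_9 + n_10 D_1 with n_i ∈ {0,1}, then n_2 = n_3 = ... = n_9 = 1 and n_1 + n_10 = 1; i.e., 2R equals either C_1 + C_2 + ... + C_9 or D_1 + C_2 + ... + C_9 in N. -/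
/-- Let `N` be an even unimodular lattice of rank 10 containing a sublattice `M` of index 2,
where `M` has basis `D₁, C₁, …, C₉` with pairings `Cᵢ² = D₁² = 0`, `C₁·D₁ = 2`, `Cᵢ·D₁ = 1`
for `i ≥ 2`, `Cᵢ·Cⱼ = 1` for `i ≠ j`.  If `R ∈ N` represents the nontrivial class of `N/M`
and `2R = n₁C₁ + ⋯ + n₉C₉ + n₁₀D₁` with each `nᵢ ∈ {0,1}`, then `n₂ = ⋯ = n₉ = 1` and
`n₁ + n₁₀ = 1`; i.e. `2R` equals `C₁ + C₂ + ⋯ + C₉` or `D₁ + C₂ + ⋯ + C₉`. -/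
theorem statement13 {N : Type*} [AddCommGroup N] [Module ℤ N]
    [Module.Free ℤ N] [Module.Finite ℤ N]
    (B : N →ₗ[ℤ] N →ₗ[ℤ] ℤ)
    (hsymm : ∀ v w : N, B v w = B w v)
    (heven : ∀ v : N, 2 ∣ B v v)
    (hunimod : Function.Bijective (B : N → N →ₗ[ℤ] ℤ))
    (hrank : Module.finrank ℤ N = 10)
    (D1 : N) (C : Fin 9 → N)
    (hCC : ∀ i, B (C i) (C i) = 0) (hDD : B D1 D1 = 0)
    (hC0D : B (C 0) D1 = 2) (hCD : ∀ i, i ≠ 0 → B (C i) D1 = 1)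
    (hCij : ∀ i j, i ≠ j → B (C i) (C j) = 1)
    (M : Submodule ℤ N) (hM : M = Submodule.span ℤ (insert D1 (Set.range C)))
    (hindex : Nat.card (N ⧸ M) = 2)
    (R : N) (hR : R ∉ M)
    (nC : Fin 9 → ℤ) (nD : ℤ)
    (hn : ∀ i, nC i = 0 ∨ nC i = 1) (hnD : nD = 0 ∨ nD = 1)
    (h2R : 2 • R = (∑ i, nC i • C i) + nD • D1) :
    ((∀ i, i ≠ 0 → nC i = 1) ∧ nC 0 + nD = 1) ∧
    (2 • R = ∑ i, C i ∨ 2 • R = D1 + ∑ i ∈ Finset.univ.erase 0, C i) := by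

  classical
  have hone : ∀ v : N, (1:ℤ) • v = v := fun v => one_zsmul v
  -- B(2R, v) = 2 * B R v
  have hB2 : ∀ v : N, B (2 • R) v = 2 * B R v := by
    intro v
    rw [two_smul, map_add, LinearMap.add_apply]; ring
  have hkey : ∀ v : N, B (2 • R) v = (∑ j, nC j * B (C j) v) + nD * B D1 v := by
    intro v
    rw [h2R]
    simp [LinearMap.sum_apply, smul_eq_mul]
  -- pairing with C i
  have hCi : ∀ i : Fin 9, 2 * B R (C i)
      = (∑ j, nC j) - nC i + nD * B D1 (C i) := by
    intro i
    rw [← hB2, hkey]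
    congr 1
    have hterm : ∀ j : Fin 9, nC j * B (C j) (C i)
        = nC j - (if j = i then nC j else 0) := by
      intro j
      by_cases h : j = i
      · subst h; simp [hCC]
      · rw [hCij j i h]; simp [h]
    rw [Finset.sum_congr rfl fun j _ => hterm j, Finset.sum_sub_distrib]
    simp
  -- parities: for i ≠ 0, S - nC i + nD is even
  have hpar : ∀ i : Fin 9, i ≠ 0 → 2 ∣ ((∑ j, nC j) - nC i + nD) := by
    intro i hi
    refine ⟨B R (C i), ?_⟩
    have h1 := hCi i
    rw [hsymm D1 (C i), hCD i hi] at h1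
    linarith
  -- all nC i for i ≠ 0 agree
  have heq : ∀ i : Fin 9, i ≠ 0 → nC i = nC 1 := by
    intro i hi
    rcases hpar i hi with ⟨a, ha⟩
    rcases hpar 1 (by decide) with ⟨b, hb⟩
    rcases hn i with h | h <;> rcases hn 1 with h' | h' <;> omega
  -- sum formula
  have hS : (∑ j, nC j) = nC 0 + 8 * nC 1 := by
    rw [← Finset.add_sum_erase _ nC (Finset.mem_univ 0)]
    have : ∑ j ∈ Finset.univ.erase 0, nC j
        = ∑ j ∈ Finset.univ.erase (0 : Fin 9), nC 1 := by
      refine Finset.sum_congr rfl fun j hj => heq j (Finset.ne_of_mem_erase hj)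
    rw [this, Finset.sum_const]
    norm_num [Finset.card_erase_of_mem]
  have hpar1 : 2 ∣ ((∑ j, nC j) - nC 1 + nD) := hpar 1 (by decide)
  rw [hS] at hpar1
  -- case analysis on nC 0, nC 1, nD
  rcases hn 0 with h0 | h0 <;> rcases hn 1 with h1 | h1 <;> rcases hnD with hd | hd
  · -- all zero: 2R = 0, contradiction with R ∉ M
    exfalso
    have hz : 2 • R = 0 := by
      rw [h2R, hd]
      have : ∀ i : Fin 9, nC i • C i = 0 := by
        intro i
        by_cases hi : i = 0
        · subst hi; rw [h0]; simp
        · rw [heq i hi, h1]; simp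
      simp [this]
    have hR0 : R = 0 := by
      have hB0 : B R = B 0 := by
        ext v
        have := hB2 v
        rw [hz] at this
        simp at this ⊢
        omega
      exact hunimod.injective hB0
    exact hR (hR0 ▸ M.zero_mem)
  · -- nC0 = 0, nC1 = 0, nD = 1 : parity contradiction
    exfalso; omega
  · -- nC0 = 0, nC1 = 1, nD = 0 : parity contradiction
    exfalso; omega
  · -- nC0 = 0, nC1 = 1, nD = 1 : D1 case
    refine ⟨⟨fun i hi => (heq i hi).trans h1, by omega⟩, Or.inr ?_⟩
    rw [h2R, hd, hone, add_comm]
    congr 1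
    rw [← Finset.add_sum_erase _ (fun i => nC i • C i) (Finset.mem_univ 0), h0, zero_smul,
      zero_add]
    refine Finset.sum_congr rfl fun j hj => ?_
    rw [heq j (Finset.ne_of_mem_erase hj), h1, hone]
  · -- nC0 = 1, nC1 = 0, nD = 0 : parity contradiction
    exfalso; omega
  · -- nC0 = 1, nC1 = 0, nD = 1 : 2R = C0 + D1, evenness contradiction
    exfalso
    have h2R' : 2 • R = C 0 + D1 := by
      rw [h2R, hd, hone]
      congr 1
      rw [← Finset.add_sum_erase _ (fun i => nC i • C i) (Finset.mem_univ 0), h0, hone]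
      have : ∀ j ∈ Finset.univ.erase (0 : Fin 9), nC j • C j = 0 := by
        intro j hj
        rw [heq j (Finset.ne_of_mem_erase hj), h1, zero_smul]
      rw [Finset.sum_congr rfl this]
      simp
    have hq : B (2 • R) (2 • R) = 4 := by
      rw [h2R']
      have : B D1 (C 0) = 2 := (hsymm D1 (C 0)).trans hC0D
      simp [map_add, hCC, hDD, hC0D, this]
    have hq2 : B (2 • R) (2 • R) = 4 * B R R := by
      rw [hB2, two_smul, map_add]
      ring
    rcases heven R with ⟨k, hk⟩
    omega
  · -- nC0 = 1, nC1 = 1, nD = 0 : sum of all C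
    refine ⟨⟨fun i hi => (heq i hi).trans h1, by omega⟩, Or.inl ?_⟩
    rw [h2R, hd, zero_smul, add_zero]
    refine Finset.sum_congr rfl fun i _ => ?_
    by_cases hi : i = 0
    · subst hi; rw [h0, hone]
    · rw [heq i hi, h1, hone]
  · -- nC0 = 1, nC1 = 1, nD = 1 : parity contradiction
    exfalso; omega
end

section
/- The degree-6 polynomial 7T^6 + 6T^5 + 9T^4 + 4T^3 + 9T^2 + 6T + 7 has no roots that are roots of unity. -/
open Polynomial

instance fact_prime_five : Fact (Nat.Prime 5) := ⟨by norm_num⟩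

lemma aux_no_root_mod5 :
    ∀ z : ZMod 5, ((7:ℤ):ZMod 5) * z ^ 3 + ((6:ℤ):ZMod 5) * z ^ 2 +
      ((-12:ℤ):ZMod 5) * z + ((-8:ℤ):ZMod 5) ≠ 0 := by decide

/-- The degree-6 polynomial `7T⁶ + 6T⁵ + 9T⁴ + 4T³ + 9T² + 6T + 7` has no roots that are
roots of unity. -/
theorem statement16 (ζ : ℂ)
    (h : 7 * ζ ^ 6 + 6 * ζ ^ 5 + 9 * ζ ^ 4 + 4 * ζ ^ 3 + 9 * ζ ^ 2 + 6 * ζ + 7 = 0) :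
    ¬ ∃ n : ℕ, 0 < n ∧ ζ ^ n = 1 := by
  rintro ⟨n, hn, hζn⟩
  have hz : ζ ≠ 0 := by
    intro h0; rw [h0, zero_pow hn.ne'] at hζn; exact zero_ne_one hζn
  -- ζ is an algebraic integer
  have hint : IsIntegral ℤ ζ := by
    refine ⟨X ^ n - 1, monic_X_pow_sub_C 1 hn.ne', ?_⟩
    simp [hζn]
  have hinv : ζ⁻¹ = ζ ^ (n - 1) := by
    refine inv_eq_of_mul_eq_one_right ?_
    calc ζ * ζ ^ (n - 1) = ζ ^ (1 + (n - 1)) := by rw [pow_add, pow_one]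
    _ = 1 := by rw [Nat.add_sub_cancel' hn, hζn]
  have hintinv : IsIntegral ℤ ζ⁻¹ := by
    rw [hinv]; exact hint.pow _
  set α : ℂ := ζ + ζ⁻¹ with hα
  have hintα : IsIntegral ℤ α := hint.add hintinv
  have key : 7 * α ^ 3 + 6 * α ^ 2 - 12 * α - 8 = 0 := by
    rw [hα]
    field_simp
    linear_combination h
  -- the integer cubic
  set p : ℤ[X] := C 7 * X ^ 3 + C 6 * X ^ 2 + C (-12) * X + C (-8) with hp
  have haev : aeval α p = 0 := by
    rw [hp]
    simp only [map_add, map_mul, map_pow, map_neg, map_ofNat, aeval_C, aeval_X,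
      algebraMap_int_eq, eq_intCast]
    linear_combination key
  set q : ℤ[X] := minpoly ℤ α with hqdef
  have hqmonic : q.Monic := minpoly.monic hintα
  have hqdvd : q ∣ p := minpoly.isIntegrallyClosed_dvd hintα haev
  obtain ⟨r, hpr⟩ := hqdvd
  have hpdeg : p.natDegree = 3 := by
    rw [hp]; compute_degree!
  have hpne : p ≠ 0 := fun h0 => by simp [h0] at hpdeg
  have hrne : r ≠ 0 := by rintro rfl; rw [mul_zero] at hpr; exact hpne hpr
  have hplead : p.leadingCoeff = 7 := by
    rw [Polynomial.leadingCoeff, hpdeg, hp]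
    simp only [coeff_add, coeff_C_mul, coeff_X_pow, coeff_C, coeff_X]
    norm_num
  have hrlead : r.leadingCoeff = 7 := by
    have := congrArg Polynomial.leadingCoeff hpr
    rwa [leadingCoeff_mul, hqmonic.leadingCoeff, one_mul, hplead, eq_comm] at this
  have hdegsum : q.natDegree + r.natDegree = 3 := by
    rw [← hpdeg, hpr, natDegree_mul hqmonic.ne_zero hrne]
  have hq1 : 1 ≤ q.natDegree := minpoly.natDegree_pos hintα
  -- reduction mod 5
  have hrootfree : ∀ z : ZMod 5, eval z (p.map (Int.castRingHom (ZMod 5))) ≠ 0 := by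
    intro z
    rw [hp]
    simp only [Polynomial.map_add, Polynomial.map_mul, Polynomial.map_pow,
      map_C, map_X, eval_add, eval_mul, eval_pow, eval_C, eval_X, eq_intCast,
      Polynomial.map_intCast, Polynomial.eval_intCast]
    exact aux_no_root_mod5 z
  -- a degree-1 factor gives a root
  have hlin : ∀ g : (ZMod 5)[X], g.natDegree = 1 →
      g ∣ p.map (Int.castRingHom (ZMod 5)) → False := by
    intro g hg hgd
    obtain ⟨s, hs⟩ := hgd
    have hc1 : g.coeff 1 ≠ 0 := by
      have : g.leadingCoeff ≠ 0 := leadingCoeff_ne_zero.mpr (fun h0 => by simp [h0] at hg)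
      rwa [Polynomial.leadingCoeff, hg] at this
    rw [eq_X_add_C_of_natDegree_le_one hg.le] at hs
    refine hrootfree (-(g.coeff 0) * (g.coeff 1)⁻¹) ?_
    rw [hs, eval_mul]
    simp only [eval_add, eval_mul, eval_C, eval_X]
    have hzero : g.coeff 1 * (-(g.coeff 0) * (g.coeff 1)⁻¹) + g.coeff 0 = 0 := by
      linear_combination (-(g.coeff 0)) * mul_inv_cancel₀ hc1
    rw [hzero, zero_mul]
  have hcases : q.natDegree = 1 ∨ q.natDegree = 2 ∨ q.natDegree = 3 := by omega
  rcases hcases with hd | hd | hd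
  · -- deg 1
    have hqd : (q.map (Int.castRingHom (ZMod 5))).natDegree = 1 := by
      rw [hqmonic.natDegree_map, hd]
    exact hlin _ hqd ⟨r.map (Int.castRingHom (ZMod 5)), by rw [hpr, Polynomial.map_mul]⟩
  · -- deg 2
    have hrd : (r.map (Int.castRingHom (ZMod 5))).natDegree = 1 := by
      rw [natDegree_map_of_leadingCoeff_ne_zero _ (by rw [hrlead]; decide)]
      omega
    exact hlin _ hrd ⟨q.map (Int.castRingHom (ZMod 5)),
      by rw [hpr, Polynomial.map_mul, mul_comm]⟩
  · -- deg 3 : r constant = 7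
    have hrd0 : r.natDegree = 0 := by omega
    have hr7 : r = C 7 := by
      rw [eq_C_of_natDegree_eq_zero hrd0]
      congr 1
      rw [← hrlead, Polynomial.leadingCoeff, hrd0]
    have hc2 : p.coeff 2 = q.coeff 2 * 7 := by
      rw [hpr, hr7, coeff_mul_C]
    rw [hp] at hc2
    simp only [coeff_add, coeff_C_mul, coeff_X_pow, coeff_C, coeff_X] at hc2
    norm_num at hc2
    omega
end

section
/- The degree-6 polynomial 11T^6 - 2T^5 + T^4 + 12T^3 + T^2 - 2T + 11 has no roots that are roots of unity. -/
open Polynomial in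
/-- The degree-6 polynomial `11T⁶ - 2T⁵ + T⁴ + 12T³ + T² - 2T + 11` has no roots that are
roots of unity. -/
theorem statement17 (ζ : ℂ)
    (h : 11 * ζ ^ 6 - 2 * ζ ^ 5 + ζ ^ 4 + 12 * ζ ^ 3 + ζ ^ 2 - 2 * ζ + 11 = 0) :
    ¬ ∃ n : ℕ, 0 < n ∧ ζ ^ n = 1 := by
  rintro ⟨n, hn, hζn⟩
  have hζ0 : ζ ≠ 0 := by
    intro h0
    rw [h0, zero_pow hn.ne'] at hζn
    exact zero_ne_one hζn
  have hnorm : ‖ζ‖ = 1 := Complex.norm_eq_one_of_pow_eq_one hζn hn.ne'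
  have hinv : ζ⁻¹ = (starRingEnd ℂ) ζ := Complex.inv_eq_conj hnorm
  set x : ℝ := 2 * ζ.re with hxdef
  have hxc : (x : ℂ) = ζ + ζ⁻¹ := by
    rw [hinv, Complex.add_conj]
  have hqr : 11 * x ^ 3 - 2 * x ^ 2 - 32 * x + 16 = 0 := by
    have key : 11 * (x:ℂ) ^ 3 - 2 * (x:ℂ) ^ 2 - 32 * (x:ℂ) + 16 = 0 := by
      rw [hxc]
      field_simp
      linear_combination h
    exact_mod_cast key
  -- `x` is an algebraic integer
  have hζint : IsIntegral ℤ ζ :=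
    ⟨X ^ n - C 1, monic_X_pow_sub_C 1 hn.ne', by simp [hζn]⟩
  have hinveq : ζ⁻¹ = ζ ^ (n - 1) := by
    have h1 : ζ ^ (n - 1) * ζ = 1 := by
      rw [← pow_succ, Nat.sub_add_cancel hn]
      exact hζn
    exact inv_eq_of_mul_eq_one_left h1
  have hsum : IsIntegral ℤ ((x : ℂ)) := by
    rw [hxc, hinveq]; exact hζint.add (hζint.pow _)
  have hxint : IsIntegral ℤ x := by
    have := isIntegral_algebraMap_iff (R := ℤ) (A := ℝ) (B := ℂ) (x := x)
      Complex.ofReal_injective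
    rw [← this]
    simpa using hsum
  clear h hxc hζn hinv hinveq hsum hζint hnorm hζ0 hxdef
  -- `x` is a root of the primitive integer cubic `11X³ - 2X² - 32X + 16`,
  -- which has no monic integer factor: contradiction.
  set q : ℤ[X] := C 11 * X ^ 3 - C 2 * X ^ 2 - C 32 * X + C 16 with hqdef
  have hq3 : q.natDegree = 3 := by
    rw [hqdef]; compute_degree!
  have hc0 : q.coeff 0 = 16 := by rw [hqdef]; simp
  have hc1 : q.coeff 1 = -32 := by rw [hqdef]; simp [coeff_X_pow, coeff_X]
  have hc2 : q.coeff 2 = -2 := by rw [hqdef]; simp [coeff_X_pow, coeff_X]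
  have hc3 : q.coeff 3 = 11 := by rw [hqdef]; simp [coeff_X_pow, coeff_X]
  have haq : aeval x q = 0 := by
    rw [hqdef]
    simp only [map_ofNat, map_add, map_sub, map_mul, map_pow, aeval_X, aeval_C, algebraMap_int_eq, eq_intCast]
    linarith [hqr]
  have hdvd : minpoly ℤ x ∣ q := minpoly.isIntegrallyClosed_dvd hxint haq
  obtain ⟨p, hp⟩ := hdvd
  set M := minpoly ℤ x with hMdef
  have hMmonic : M.Monic := minpoly.monic hxint
  have hq0 : q ≠ 0 := fun h0 => by simp [h0] at hq3
  have hp0 : p ≠ 0 := fun h0 => by rw [h0, mul_zero] at hp; exact hq0 hp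
  have hdeg : M.natDegree + p.natDegree = 3 := by
    rw [← hq3, hp, natDegree_mul (hMmonic.ne_zero) hp0]
  have hMdpos : 0 < M.natDegree := minpoly.natDegree_pos hxint
  have hplead : p.coeff p.natDegree = 11 := by
    have h1 : q.leadingCoeff = M.leadingCoeff * p.leadingCoeff := by
      rw [hp, leadingCoeff_mul]
    rw [hMmonic.leadingCoeff, one_mul, leadingCoeff, hq3, hc3] at h1
    exact h1.symm
  have hMlead : M.coeff M.natDegree = 1 := hMmonic.coeff_natDegree
  -- coefficient equations
  have e0 : M.coeff 0 * p.coeff 0 = 16 := by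
    rw [← hc0, hp, mul_coeff_zero]
  have e1 : M.coeff 0 * p.coeff 1 + M.coeff 1 * p.coeff 0 = -32 := by
    rw [← hc1, hp, coeff_mul]
    rw [Finset.Nat.sum_antidiagonal_eq_sum_range_succ_mk]
    simp [Finset.sum_range_succ]
  have e2 : M.coeff 0 * p.coeff 2 + M.coeff 1 * p.coeff 1 + M.coeff 2 * p.coeff 0 = -2 := by
    rw [← hc2, hp, coeff_mul]
    rw [Finset.Nat.sum_antidiagonal_eq_sum_range_succ_mk]
    simp [Finset.sum_range_succ]

  -- case analysis on the degree of M
  have hMle : M.natDegree ≤ 3 := by omega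
  interval_cases hd : M.natDegree
  · -- M.natDegree = 1
    have hpd : p.natDegree = 2 := by omega
    have hM2 : M.coeff 2 = 0 := coeff_eq_zero_of_natDegree_lt (by omega)
    rw [hpd] at hplead
    simp only [hMlead, hM2, hplead] at e0 e1 e2
    have hdvd16 : M.coeff 0 ∣ 16 := ⟨p.coeff 0, e0.symm⟩
    have hb1 : M.coeff 0 ≤ 16 := Int.le_of_dvd (by norm_num) hdvd16
    have hb2 : -16 ≤ M.coeff 0 := by
      have := Int.le_of_dvd (b := 16) (by norm_num) ((neg_dvd).2 hdvd16)
      omega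
    set a := M.coeff 0 with ha
    set b1 := p.coeff 1 with hb1d
    set b0 := p.coeff 0 with hb0d
    interval_cases a <;> omega
  · -- M.natDegree = 2
    have hpd : p.natDegree = 1 := by omega
    have hp2 : p.coeff 2 = 0 := coeff_eq_zero_of_natDegree_lt (by omega)
    rw [hpd] at hplead
    simp only [hMlead, hplead, hp2] at e0 e1 e2
    set m1 := M.coeff 1 with hm1d
    set m0 := M.coeff 0 with hm0d
    set c0 := p.coeff 0 with hc0d
    have hdvd16 : c0 ∣ 16 := ⟨m0, by linarith [e0]⟩
    have hb1 : c0 ≤ 16 := Int.le_of_dvd (by norm_num) hdvd16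
    have hb2 : -16 ≤ c0 := by
      have := Int.le_of_dvd (b := 16) (by norm_num) ((neg_dvd).2 hdvd16)
      omega
    have hm1cases : m1 = -1 ∨ m1 = 0 ∨ m1 = 1 := by omega
    rcases hm1cases with hm1 | hm1 | hm1 <;> simp only [hm1] at e1 e2 <;>
      [ (have hc0 : c0 = 9 := by omega);
        (have hc0 : c0 = -2 := by omega);
        (have hc0 : c0 = -13 := by omega)] <;>
      simp only [hc0] at e0 e1 <;> omega
  · -- M.natDegree = 3
    have hpd : p.natDegree = 0 := by omega
    rw [hpd] at hplead
    have hp1 : p.coeff 1 = 0 := coeff_eq_zero_of_natDegree_lt (by omega)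
    have hp2 : p.coeff 2 = 0 := coeff_eq_zero_of_natDegree_lt (by omega)
    simp only [hplead, hp1, hp2] at e2
    omega
end

section
/- The point (0, 0, √(821/5), -2, 1, √(2/5)) is a ℚ_3-point of the variety defined by xy + 5z^2 = s^2, (x+y)(x+2y) = s^2 - 5t^2, 12x^2 + 111y^2 + 13z^2 = u^2; in particular, 821/5 and 2/5 are squares in ℚ_3, and with x = -2, y = 1, z = √(2/5): xy + 5z^2 = -2 + 2 = 0 = s^2 with s = 0, (x+y)(x+2y) = (-1)(0) = 0 = 0 - 5·0, and 12·4 + 111 + 13·(2/5) = 48 + 111 + 26/5 = 821/5 = u^2. -/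
open Polynomial in
lemma aux_sq (c : ℤ_[3]) (h : ‖c - 1‖ < 1) : ∃ z : ℤ_[3], z ^ 2 = c := by
  have h2 : ‖((X ^ 2 - C c : ℤ_[3][X]).derivative.eval 1)‖ = 1 := by
    have : ((X ^ 2 - C c : ℤ_[3][X]).derivative.eval 1) = 2 := by
      simp [derivative_sub, one_add_one_eq_two]
    rw [this]
    refine le_antisymm (PadicInt.norm_le_one _) (not_lt.mp ?_)
    rw [show (2 : ℤ_[3]) = ((2 : ℤ) : ℤ_[3]) by norm_cast,
      PadicInt.norm_int_lt_one_iff_dvd]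
    decide
  obtain ⟨z, hz, -⟩ := hensels_lemma (F := X ^ 2 - C c) (a := 1) (by
    change ‖eval 1 (X ^ 2 - C c)‖ < ‖eval 1 (derivative (X ^ 2 - C c))‖ ^ 2
    rw [h2]
    simpa [norm_sub_rev] using h)
  exact ⟨z, by simpa [sub_eq_zero] using hz⟩

lemma norm_lt (n : ℤ) (h : (3 : ℤ) ∣ n) : ‖((n : ℤ_[3]) : ℤ_[3])‖ < 1 :=
  (PadicInt.norm_int_lt_one_iff_dvd n).mpr (by exact_mod_cast h)

/-- The point `(0 : 0 : √(821/5) : -2 : 1 : √(2/5))` is a `ℚ₃`-point of the variety defined by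
`xy + 5z² = s²`, `(x+y)(x+2y) = s² - 5t²`, `12x² + 111y² + 13z² = u²`.  In particular `2/5`
and `821/5` are squares in `ℚ₃`, and for any square roots `z, u` of them the three equations
hold with `s = 0`, `t = 0`, `x = -2`, `y = 1`. -/
theorem statement18 :
    IsSquare ((2 : ℚ_[3]) / 5) ∧ IsSquare ((821 : ℚ_[3]) / 5) ∧
    ∀ z u : ℚ_[3], z ^ 2 = 2 / 5 → u ^ 2 = 821 / 5 →
      ((-2 : ℚ_[3]) * 1 + 5 * z ^ 2 = 0 ^ 2 ∧
       ((-2 : ℚ_[3]) + 1) * ((-2) + 2 * 1) = 0 ^ 2 - 5 * 0 ^ 2 ∧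
       12 * (-2 : ℚ_[3]) ^ 2 + 111 * 1 ^ 2 + 13 * z ^ 2 = u ^ 2) := by
  have h5 : (5 : ℚ_[3]) ≠ 0 := by norm_num
  obtain ⟨z, hz⟩ := aux_sq 10 (by
    have := norm_lt 9 (by norm_num)
    simpa [show ((10 : ℤ_[3]) - 1) = ((9 : ℤ) : ℤ_[3]) by norm_cast] using this)
  obtain ⟨u, hu⟩ := aux_sq 4105 (by
    have := norm_lt 4104 (by norm_num)
    simpa [show ((4105 : ℤ_[3]) - 1) = ((4104 : ℤ) : ℤ_[3]) by norm_cast] using this)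
  refine ⟨⟨(z : ℚ_[3]) / 5, ?_⟩, ⟨(u : ℚ_[3]) / 5, ?_⟩, ?_⟩
  · have : ((z : ℚ_[3])) ^ 2 = 10 := by exact_mod_cast congrArg (PadicInt.Coe.ringHom) hz
    field_simp
    rw [this]; norm_num
  · have : ((u : ℚ_[3])) ^ 2 = 4105 := by exact_mod_cast congrArg (PadicInt.Coe.ringHom) hu
    field_simp
    rw [this]; norm_num
  · intro z u hz hu
    refine ⟨by rw [hz]; ring, by ring, ?_⟩
    rw [hz, hu]
    field_simp
    ring
end
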